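/- Fix p ∈ (1, ∞) and let g_p(x) = p·Γ(1+1/p)^(-1)·x^p·e^(-x^p) for x > 0. Then for all x > 0, g_p(x) ≥ (p/4)·𝟙_{[1-1/(2p), 1]}(x). -/

import Mathlib

open Real

theorem density_lower_bound_sections (p : ℝ) (hp : 1 < p) :
    ∀ x : ℝ, 0 < x →
      (Set.Icc (1 - 1 / (2 * p)) 1).indicator (fun _ => p / 4) x ≤
        p * (Real.Gamma (1 + 1 / p))⁻¹ * x ^ p * Real.exp (-(x ^ p)) := by
  intro x hx
  have hp0 : (0:ℝ) < p := lt_trans one_pos hp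
  have hs0 : (0:ℝ) < 1 / p := by positivity
  have hs1 : 1 / p < 1 := by
    rw [div_lt_one hp0]; exact hp
  -- Gamma (1 + 1/p) ≤ 1
  have hG1 : Real.Gamma (1 + 1 / p) ≤ 1 := by
    have hcv := Real.convexOn_log_Gamma.2 (Set.mem_Ioi.mpr one_pos)
      (Set.mem_Ioi.mpr (by norm_num : (0:ℝ) < 2))
      (by linarith : (0:ℝ) ≤ 1 - 1/p) (le_of_lt hs0) (by ring)
    have h12 : (1 - 1/p) • (1:ℝ) + (1/p) • (2:ℝ) = 1 + 1/p := by
      simp [smul_eq_mul]; ring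
    rw [h12] at hcv
    simp only [Function.comp_apply, Real.Gamma_one, Real.Gamma_two, Real.log_one,
      smul_eq_mul, mul_zero, add_zero] at hcv
    have hGpos : 0 < Real.Gamma (1 + 1/p) := Real.Gamma_pos_of_pos (by linarith)
    exact (Real.log_nonpos_iff (le_of_lt hGpos)).mp hcv
  have hGpos : 0 < Real.Gamma (1 + 1/p) := Real.Gamma_pos_of_pos (by linarith)
  have hGinv : (1:ℝ) ≤ (Real.Gamma (1 + 1/p))⁻¹ := (one_le_inv₀ hGpos).mpr hG1
  by_cases hmem : x ∈ Set.Icc (1 - 1 / (2 * p)) 1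
  · rw [Set.indicator_of_mem hmem]
    obtain ⟨hxl, hxr⟩ := hmem
    set t := x ^ p with ht
    have ht1 : t ≤ 1 := Real.rpow_le_one (le_of_lt hx) hxr (le_of_lt hp0)
    have ht2 : (1:ℝ)/2 ≤ t := by
      have h2p : (0:ℝ) < 2*p := by linarith
      have h3 : 1/(2*p) < 1 := by
        rw [div_lt_one h2p]; linarith
      have hm1 : (-1:ℝ) ≤ -(1/(2*p)) := by linarith
      have hb := one_add_mul_self_le_rpow_one_add hm1 (le_of_lt hp)
      have : (1:ℝ) + p * (-(1/(2*p))) = 1/2 := by field_simp; ring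
      rw [this] at hb
      have hx' : (1 : ℝ) + -(1/(2*p)) = 1 - 1/(2*p) := by ring
      rw [hx'] at hb
      calc (1:ℝ)/2 ≤ (1 - 1/(2*p)) ^ p := hb
        _ ≤ x ^ p := Real.rpow_le_rpow (by nlinarith) hxl (le_of_lt hp0)
    have htpos : 0 < t := lt_of_lt_of_le (by norm_num) ht2
    -- exp t ≤ 4 t
    have hexp : Real.exp t ≤ 4 * t := by
      have h1 : Real.exp (1 - t) ≥ 2 - t := by
        have := Real.add_one_le_exp (1 - t)
        linarith
      have h2 : (0:ℝ) < 2 - t := by linarith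
      have h3 : Real.exp t * Real.exp (1 - t) = Real.exp 1 := by
        rw [← Real.exp_add]; ring_nf
      have he : Real.exp 1 < 3 := by
        have := Real.exp_one_lt_d9; linarith
      have h4 : Real.exp t * (2 - t) ≤ Real.exp 1 := by
        calc Real.exp t * (2 - t) ≤ Real.exp t * Real.exp (1 - t) :=
              mul_le_mul_of_nonneg_left h1 (le_of_lt (Real.exp_pos t))
          _ = Real.exp 1 := h3
      nlinarith [Real.exp_pos t]
    have hkey : (1:ℝ)/4 ≤ t * Real.exp (-t) := by
      have heq : t * Real.exp (-t) = t / Real.exp t := by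
        rw [Real.exp_neg]; ring
      rw [heq, le_div_iff₀ (Real.exp_pos t)]
      linarith
    calc p / 4 = p * 1 * (1/4) := by ring
      _ ≤ p * (Real.Gamma (1 + 1/p))⁻¹ * (t * Real.exp (-t)) := by
          apply mul_le_mul
          · exact mul_le_mul_of_nonneg_left hGinv (le_of_lt hp0)
          · exact hkey
          · norm_num
          · positivity
      _ = p * (Real.Gamma (1 + 1/p))⁻¹ * x ^ p * Real.exp (-(x ^ p)) := by
          rw [ht]; ring
  · rw [Set.indicator_of_notMem hmem]
    have : 0 < x ^ p := Real.rpow_pos_of_pos hx p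
    positivity
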